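/- For all n >= i >= 1, the number c(n,i) of occurrences of the part i among all compositions of n satisfies c(n,i) = c(n-i+1, 1). -/

import Mathlib

/-- `c n i` is the total number of occurrences of the integer `i` as a part,
summed over all compositions of `n`. -/
def partCount (n i : ℕ) : ℕ := ∑ K : Composition n, K.blocks.count i

namespace PartCountAux

/-- Replace the element at index `j` of `l` by `x`. -/
def repl (l : List ℕ) (j : ℕ) (x : ℕ) : List ℕ := l.take j ++ x :: l.drop (j + 1)

lemma decomp (l : List ℕ) {j : ℕ} (h : j < l.length) :
    l.take j ++ l.getD j 0 :: l.drop (j + 1) = l := by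
  rw [List.getD_eq_getElem l 0 h, List.getElem_cons_drop, List.take_append_drop]

lemma repl_self (l : List ℕ) {j : ℕ} (h : j < l.length) : repl l j (l.getD j 0) = l :=
  decomp l h

lemma repl_sum (l : List ℕ) {j : ℕ} (h : j < l.length) (x : ℕ) :
    (repl l j x).sum + l.getD j 0 = l.sum + x := by
  conv_rhs => rw [← decomp l h]
  simp [repl]
  ring

lemma length_take_eq (l : List ℕ) {j : ℕ} (h : j < l.length) : (l.take j).length = j := by
  rw [List.length_take]
  omega

lemma repl_getD (l : List ℕ) {j : ℕ} (h : j < l.length) (x : ℕ) :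
    (repl l j x).getD j 0 = x := by
  rw [repl, List.getD_append_right (l.take j) (x :: l.drop (j + 1)) 0 j
    (le_of_eq (length_take_eq l h)), length_take_eq l h, Nat.sub_self,
    List.getD_cons_zero]

lemma take_repl (l : List ℕ) {j : ℕ} (h : j < l.length) (x : ℕ) :
    (repl l j x).take j = l.take j := by
  have ht : (l.take j).length = j := length_take_eq l h
  rw [repl, List.take_append, ht, Nat.sub_self, List.take_zero,
    List.append_nil, List.take_take, min_self]

lemma drop_repl (l : List ℕ) {j : ℕ} (h : j < l.length) (x : ℕ) :
    (repl l j x).drop (j + 1) = l.drop (j + 1) := by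
  have ht : (l.take j).length = j := length_take_eq l h
  conv_lhs => rw [repl, show j + 1 = (l.take j).length + 1 by omega,
    List.drop_length_add_append, List.drop_one, List.tail_cons]
  rw [ht]

lemma repl_repl (l : List ℕ) {j : ℕ} (h : j < l.length) (x y : ℕ) :
    repl (repl l j x) j y = repl l j y := by
  conv_lhs => rw [repl]
  rw [take_repl l h, drop_repl l h, repl]

lemma mem_repl {l : List ℕ} {j x y : ℕ} (hy : y ∈ repl l j x) : y ∈ l ∨ y = x := by
  rw [repl, List.mem_append, List.mem_cons] at hy
  rcases hy with h | h | h
  · exact Or.inl (List.mem_of_mem_take h)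
  · exact Or.inr h
  · exact Or.inl (List.mem_of_mem_drop h)

lemma length_le_sum (l : List ℕ) (h : ∀ x ∈ l, 0 < x) : l.length ≤ l.sum := by
  induction l with
  | nil => simp
  | cons a t ih =>
    simp only [List.mem_cons, forall_eq_or_imp] at h
    have := ih h.2
    have := h.1
    simp only [List.length_cons, List.sum_cons]
    omega

lemma index_add_le_sum (l : List ℕ) {j : ℕ} (h : j < l.length) (hpos : ∀ x ∈ l, 0 < x) :
    j + l.getD j 0 ≤ l.sum := by
  conv_rhs => rw [← decomp l h]
  rw [List.sum_append, List.sum_cons]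
  have h1 : (l.take j).length ≤ (l.take j).sum :=
    length_le_sum _ fun x hx => hpos x (List.mem_of_mem_take hx)
  rw [length_take_eq l h] at h1
  omega

lemma lt_length_of_getD {l : List ℕ} {j i : ℕ} (h : l.getD j 0 = i) (hi : i ≠ 0) :
    j < l.length := by
  by_contra hc
  rw [List.getD_eq_default _ _ (by omega)] at h
  exact hi h.symm

lemma count_eq_sum_range (i : ℕ) (hi : i ≠ 0) (l : List ℕ) :
    ∀ n, l.length ≤ n →
      l.count i = ∑ j ∈ Finset.range n, if l.getD j 0 = i then 1 else 0 := by
  induction l with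
  | nil =>
    intro n _
    simp only [List.count_nil]
    rw [Finset.sum_eq_zero]
    intro j _
    simp [List.getD, hi.symm]
  | cons a t ih =>
    intro n hn
    obtain ⟨n', rfl⟩ : ∃ n', n = n' + 1 := by
      cases n with
      | zero => simp at hn
      | succ k => exact ⟨k, rfl⟩
    rw [Finset.sum_range_succ']
    simp only [List.getD_cons_succ, List.getD_cons_zero]
    rw [← ih n' (by simpa using hn)]
    simp [List.count_cons]

lemma count_eq_card (i : ℕ) (hi : i ≠ 0) (l : List ℕ) {n : ℕ} (hl : l.length ≤ n) :
    l.count i = Fintype.card {j : Fin n // l.getD j 0 = i} := by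
  rw [Fintype.card_subtype, Finset.card_filter, count_eq_sum_range i hi l n hl]
  exact (Fin.sum_univ_eq_sum_range _ n).symm

lemma partCount_card (n i : ℕ) (hi : i ≠ 0) :
    partCount n i =
      Fintype.card {p : Composition n × Fin n // p.1.blocks.getD p.2 0 = i} := by
  rw [Fintype.card_congr (Equiv.subtypeProdEquivSigmaSubtype
    (fun (K : Composition n) (j : Fin n) => K.blocks.getD j 0 = i)), Fintype.card_sigma]
  unfold partCount
  refine Finset.sum_congr rfl fun K _ => ?_
  exact count_eq_card i hi _ (le_trans (le_of_eq K.blocks_length) K.length_le)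

/-- The basic move: replace one marked block equal to `i` by a block equal to `x`. -/
def step (n m i x : ℕ) (hi : i ≠ 0) (hx : 0 < x)
    (hsum : ∀ s, s + i = n + x → s = m) (hjm : ∀ j, j + i ≤ n → j < m)
    (q : {p : Composition n × Fin n // p.1.blocks.getD p.2 0 = i}) :
    {p : Composition m × Fin m // p.1.blocks.getD p.2 0 = x} :=
  have hj : (q.1.2 : ℕ) < q.1.1.blocks.length := lt_length_of_getD q.2 hi
  ⟨(⟨repl q.1.1.blocks q.1.2 x,
      fun hy => (mem_repl hy).elim (fun h' => q.1.1.blocks_pos h') (fun h => h ▸ hx),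
      hsum _ (by
        have h2 := repl_sum q.1.1.blocks hj x
        rw [q.2, q.1.1.blocks_sum] at h2
        exact h2)⟩,
    ⟨q.1.2, by
      have h3 := index_add_le_sum q.1.1.blocks hj (fun y hy => q.1.1.blocks_pos hy)
      rw [q.2, q.1.1.blocks_sum] at h3
      exact hjm _ h3⟩),
    repl_getD _ hj x⟩

lemma step_step {n m i x : ℕ} (hi : i ≠ 0) (hx : 0 < x)
    (hsum : ∀ s, s + i = n + x → s = m) (hjm : ∀ j, j + i ≤ n → j < m)
    (hx' : x ≠ 0) (hi' : 0 < i)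
    (hsum' : ∀ s, s + x = m + i → s = n) (hjm' : ∀ j, j + x ≤ m → j < n)
    (q : {p : Composition n × Fin n // p.1.blocks.getD p.2 0 = i}) :
    step m n x i hx' hi' hsum' hjm' (step n m i x hi hx hsum hjm q) = q := by
  obtain ⟨⟨K, j⟩, h⟩ := q
  have hj : (j : ℕ) < K.blocks.length := lt_length_of_getD h hi
  apply Subtype.ext
  refine Prod.ext ?_ (Fin.ext rfl)
  apply Composition.ext
  show repl (repl K.blocks j x) j i = K.blocks
  rw [repl_repl _ hj, ← h, repl_self _ hj]

end PartCountAux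

/-- For `n ≥ i ≥ 1`, `c(n,i) = c(n-i+1, 1)`. -/
theorem partCount_eq_partCount_one (n i : ℕ) (hi : 1 ≤ i) (hn : i ≤ n) :
    partCount n i = partCount (n - i + 1) 1 := by
  open PartCountAux in
  rw [partCount_card n i (by omega), partCount_card (n - i + 1) 1 one_ne_zero]
  refine Fintype.card_congr
    ⟨step n (n - i + 1) i 1 (by omega) one_pos (by omega) (by omega),
     step (n - i + 1) n 1 i one_ne_zero (by omega) (by omega) (by omega),
     step_step _ _ _ _ _ _ _ _,
     step_step _ _ _ _ _ _ _ _⟩
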